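/- arXiv:1505.05310 — 2 statements merged into one kernel-verified Lean document; each statement's English description precedes it below -/
import Mathlib

section
/- Error in ridge regression due to Stage-1 estimation (deterministic form of Lemma B.3): Let λ > 0, c, η > 0, and let x̄_t, x̂_t ∈ ℝ^{d_x} and ȳ_t, ŷ_t ∈ ℝ^{d_y} for t = 1,…,N satisfy ‖x̄_t‖ ≤ c, ‖ȳ_t‖ ≤ c, ‖x̂_t − x̄_t‖ ≤ η, ‖ŷ_t − ȳ_t‖ ≤ η. Define the ridge-regression matrices Ŵ_λ = ((1/N)∑_t ŷ_t x̂_tᵀ)·((1/N)∑_t x̂_t x̂_tᵀ + λI)^{−1} and W̄_λ = ((1/N)∑_t ȳ_t x̄_tᵀ)·((1/N)∑_t x̄_t x̄_tᵀ + λI)^{−1}. Then ‖Ŵ_λ − W̄_λ‖ ≤ ‖(1/N)∑_t ȳ_t ȳ_tᵀ‖^{1/2}·(2cη + η²)·λ^{−3/2} + (2cη + η²)/λ. -/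
open scoped Matrix.Norms.L2Operator
open scoped RealInnerProductSpace
open Matrix Finset

namespace RidgeAux

noncomputable def Ee {n : Type*} (v : n → ℝ) : EuclideanSpace ℝ n := (WithLp.equiv 2 (n → ℝ)).symm v

lemma inner_Ee {n : Type*} [Fintype n] (u v : n → ℝ) : ⟪Ee u, Ee v⟫ = u ⬝ᵥ v := by
  simp [PiLp.inner_apply, Ee, dotProduct, RCLike.inner_apply, mul_comm]

lemma normEe_sq {n : Type*} [Fintype n] (u : n → ℝ) : ‖Ee u‖ ^ 2 = u ⬝ᵥ u := by
  rw [← real_inner_self_eq_norm_sq, inner_Ee]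

lemma dot_le {n : Type*} [Fintype n] (u v : n → ℝ) : u ⬝ᵥ v ≤ ‖Ee u‖ * ‖Ee v‖ := by
  rw [← inner_Ee]; exact real_inner_le_norm _ _

lemma norm_mulVec_le {m n : Type*} [Fintype m] [Fintype n] [DecidableEq n]
    (A : Matrix m n ℝ) (x : n → ℝ) : ‖Ee (A *ᵥ x)‖ ≤ ‖A‖ * ‖Ee x‖ :=
  A.l2_opNorm_mulVec (Ee x)

lemma opNorm_le_bound {m n : Type*} [Fintype m] [Fintype n] [DecidableEq n]
    (A : Matrix m n ℝ) {K : ℝ} (hK : 0 ≤ K)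
    (h : ∀ x : n → ℝ, ‖Ee (A *ᵥ x)‖ ≤ K * ‖Ee x‖) : ‖A‖ ≤ K := by
  rw [Matrix.l2_opNorm_def]
  exact ContinuousLinearMap.opNorm_le_bound _ hK fun x => h x

lemma vecMulVec_mulVec' {m n : Type*} [Fintype n] (a : m → ℝ) (b : n → ℝ) (u : n → ℝ) :
    vecMulVec a b *ᵥ u = (b ⬝ᵥ u) • a := by
  ext i
  simp [vecMulVec_apply, mulVec, dotProduct, Finset.mul_sum, mul_assoc, mul_comm, mul_left_comm]

lemma quad_sum {m n N : ℕ} (y : Fin N → Fin m → ℝ) (x : Fin N → Fin n → ℝ)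
    (v : Fin m → ℝ) (u : Fin n → ℝ) :
    v ⬝ᵥ (((N:ℝ)⁻¹ • ∑ t, vecMulVec (y t) (x t)) *ᵥ u)
      = (N:ℝ)⁻¹ * ∑ t, (v ⬝ᵥ y t) * (x t ⬝ᵥ u) := by
  rw [smul_mulVec, dotProduct_smul]
  congr 1
  have h : (∑ t, vecMulVec (y t) (x t)) *ᵥ u = ∑ t, ((x t ⬝ᵥ u) • y t) := by
    ext i
    simp only [mulVec, dotProduct, Matrix.sum_apply, vecMulVec_apply, Finset.sum_apply,
      Pi.smul_apply, smul_eq_mul, Finset.sum_mul]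
    rw [Finset.sum_comm]
    exact Finset.sum_congr rfl fun t _ => Finset.sum_congr rfl fun j _ => by ring
  rw [h]
  have h2 : v ⬝ᵥ (∑ t, (x t ⬝ᵥ u) • y t) = ∑ t, v ⬝ᵥ ((x t ⬝ᵥ u) • y t) := by
    simp only [dotProduct, Finset.sum_apply, Finset.mul_sum]
    rw [Finset.sum_comm]
  rw [h2]
  exact Finset.sum_congr rfl fun t _ => by rw [dotProduct_smul]; simp [mul_comm]

lemma norm_vecMulVec_le {m n : Type*} [Fintype m] [Fintype n] [DecidableEq n]
    (u : m → ℝ) (v : n → ℝ) : ‖vecMulVec u v‖ ≤ ‖Ee u‖ * ‖Ee v‖ := by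
  refine opNorm_le_bound _ (by positivity) fun x => ?_
  rw [vecMulVec_mulVec']
  have h1 : ‖Ee ((v ⬝ᵥ x) • u)‖ = |v ⬝ᵥ x| * ‖Ee u‖ := by
    have : Ee ((v ⬝ᵥ x) • u) = (v ⬝ᵥ x) • Ee u := rfl
    rw [this, norm_smul, Real.norm_eq_abs]
  rw [h1]
  have h2 : |v ⬝ᵥ x| ≤ ‖Ee v‖ * ‖Ee x‖ := by
    rw [← inner_Ee]; exact abs_real_inner_le_norm _ _
  calc |v ⬝ᵥ x| * ‖Ee u‖ ≤ (‖Ee v‖ * ‖Ee x‖) * ‖Ee u‖ := by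
        exact mul_le_mul_of_nonneg_right h2 (norm_nonneg _)
    _ = ‖Ee u‖ * ‖Ee v‖ * ‖Ee x‖ := by ring
lemma transpose_vecMulVec' {m n : Type*} (a : m → ℝ) (b : n → ℝ) :
    (vecMulVec a b)ᵀ = vecMulVec b a := by
  ext i j; simp [vecMulVec_apply, transpose_apply, mul_comm]

lemma conjT_eq_transpose {m n : Type*} (A : Matrix m n ℝ) : Aᴴ = Aᵀ := by
  ext i j; simp [conjTranspose_apply]

lemma norm_transpose {m n : Type*} [Fintype m] [Fintype n] [DecidableEq m] [DecidableEq n]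
    (A : Matrix m n ℝ) : ‖Aᵀ‖ = ‖A‖ := by
  rw [← conjT_eq_transpose, Matrix.l2_opNorm_conjTranspose]

lemma isUnit_det_of_quad {n : ℕ} (G : Matrix (Fin n) (Fin n) ℝ) {lam : ℝ} (hlam : 0 < lam)
    (h : ∀ u : Fin n → ℝ, lam * (u ⬝ᵥ u) ≤ u ⬝ᵥ (G *ᵥ u)) : IsUnit G.det := by
  rw [← Matrix.isUnit_iff_isUnit_det, ← Matrix.mulVec_injective_iff_isUnit]
  intro u v huv
  have hw : G *ᵥ (u - v) = 0 := by rw [mulVec_sub, huv, sub_self]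
  have h1 := h (u - v)
  rw [hw, dotProduct_zero] at h1
  have h2 : 0 ≤ (u - v) ⬝ᵥ (u - v) := by rw [← normEe_sq]; positivity
  have h3 : (u - v) ⬝ᵥ (u - v) = 0 := by nlinarith
  rw [dotProduct_self_eq_zero] at h3
  exact sub_eq_zero.mp h3

lemma inv_norm_le {n : ℕ} (G : Matrix (Fin n) (Fin n) ℝ) {lam : ℝ} (hlam : 0 < lam)
    (h : ∀ u : Fin n → ℝ, lam * (u ⬝ᵥ u) ≤ u ⬝ᵥ (G *ᵥ u)) : ‖G⁻¹‖ ≤ lam⁻¹ := by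
  have hdet := isUnit_det_of_quad G hlam h
  refine opNorm_le_bound _ (by positivity) fun v => ?_
  set u := G⁻¹ *ᵥ v with hu
  have hGu : G *ᵥ u = v := by rw [hu, mulVec_mulVec, mul_nonsing_inv _ hdet, one_mulVec]
  have h1 : lam * (u ⬝ᵥ u) ≤ u ⬝ᵥ v := by rw [← hGu]; exact h u
  have h2 : u ⬝ᵥ v ≤ ‖Ee u‖ * ‖Ee v‖ := dot_le u v
  have h3 : lam * ‖Ee u‖ ^ 2 ≤ ‖Ee u‖ * ‖Ee v‖ := by rw [normEe_sq]; linarith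
  rcases eq_or_lt_of_le (norm_nonneg (Ee u)) with h0 | h0
  · rw [← h0]; positivity
  · have h4 : lam * ‖Ee u‖ ≤ ‖Ee v‖ := by nlinarith
    calc ‖Ee u‖ = lam⁻¹ * (lam * ‖Ee u‖) := by field_simp
      _ ≤ lam⁻¹ * ‖Ee v‖ := by
          exact mul_le_mul_of_nonneg_left h4 (inv_nonneg.mpr hlam.le)

lemma quad_decomp {n N : ℕ} (lam : ℝ) (xb : Fin N → Fin n → ℝ) (u : Fin n → ℝ) :
    u ⬝ᵥ ((((N:ℝ)⁻¹ • ∑ t, vecMulVec (xb t) (xb t)) + lam • 1) *ᵥ u)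
      = (N:ℝ)⁻¹ * ∑ t, (xb t ⬝ᵥ u) ^ 2 + lam * (u ⬝ᵥ u) := by
  rw [add_mulVec, dotProduct_add, quad_sum, smul_mulVec, one_mulVec, dotProduct_smul,
    smul_eq_mul]
  congr 1
  congr 1
  exact Finset.sum_congr rfl fun t _ => by rw [dotProduct_comm u (xb t), sq]

lemma quad_lower {n N : ℕ} {lam : ℝ} (hlam : 0 < lam) (xb : Fin N → Fin n → ℝ)
    (u : Fin n → ℝ) :
    lam * (u ⬝ᵥ u) ≤ u ⬝ᵥ ((((N:ℝ)⁻¹ • ∑ t, vecMulVec (xb t) (xb t)) + lam • 1) *ᵥ u) := by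
  rw [quad_decomp]
  have : 0 ≤ (N:ℝ)⁻¹ * ∑ t, (xb t ⬝ᵥ u) ^ 2 := by positivity
  linarith
lemma key {dx dy N : ℕ} {lam : ℝ} (hlam : 0 < lam)
    (xb : Fin N → Fin dx → ℝ) (yb : Fin N → Fin dy → ℝ) :
    ‖((N:ℝ)⁻¹ • ∑ t, vecMulVec (yb t) (xb t)) *
        (((N:ℝ)⁻¹ • ∑ t, vecMulVec (xb t) (xb t)) + lam • 1)⁻¹‖
      ≤ Real.sqrt (lam⁻¹ * ‖(N:ℝ)⁻¹ • ∑ t, vecMulVec (yb t) (yb t)‖) := by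
  set Sxx : Matrix (Fin dx) (Fin dx) ℝ := (N:ℝ)⁻¹ • ∑ t, vecMulVec (xb t) (xb t) with hSxx
  set Gb : Matrix (Fin dx) (Fin dx) ℝ := Sxx + lam • 1 with hGb
  set Syx : Matrix (Fin dy) (Fin dx) ℝ := (N:ℝ)⁻¹ • ∑ t, vecMulVec (yb t) (xb t) with hSyx
  set Sxy : Matrix (Fin dx) (Fin dy) ℝ := (N:ℝ)⁻¹ • ∑ t, vecMulVec (xb t) (yb t) with hSxy
  set Syy : Matrix (Fin dy) (Fin dy) ℝ := (N:ℝ)⁻¹ • ∑ t, vecMulVec (yb t) (yb t) with hSyy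
  have hquad : ∀ u : Fin dx → ℝ, lam * (u ⬝ᵥ u) ≤ u ⬝ᵥ (Gb *ᵥ u) := fun u =>
    quad_lower hlam xb u
  have hdet : IsUnit Gb.det := isUnit_det_of_quad Gb hlam hquad
  -- transpose step
  have hGbT : Gbᵀ = Gb := by
    rw [hGb, hSxx]
    simp only [transpose_add, transpose_smul, transpose_one, transpose_sum]
    congr 2
    exact Finset.sum_congr rfl fun t _ => transpose_vecMulVec' _ _
  have hSxyT : Sxyᵀ = Syx := by
    rw [hSxy, transpose_smul, transpose_sum, hSyx]
    congr 1
    exact Finset.sum_congr rfl fun t _ => transpose_vecMulVec' _ _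
  have hnorm_eq : ‖Syx * Gb⁻¹‖ = ‖Gb⁻¹ * Sxy‖ := by
    have : (Gb⁻¹ * Sxy)ᵀ = Syx * Gb⁻¹ := by
      rw [transpose_mul, hSxyT, transpose_nonsing_inv, hGbT]
    rw [← this, norm_transpose]
  rw [hnorm_eq]
  -- now bound ‖Gb⁻¹ * Sxy‖
  refine opNorm_le_bound _ (Real.sqrt_nonneg _) fun v => ?_
  have hu : (Gb⁻¹ * Sxy) *ᵥ v = Gb⁻¹ *ᵥ (Sxy *ᵥ v) := (mulVec_mulVec v Gb⁻¹ Sxy).symm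
  set w : Fin dx → ℝ := Sxy *ᵥ v with hw
  set u : Fin dx → ℝ := Gb⁻¹ *ᵥ w with hudef
  have hGu : Gb *ᵥ u = w := by rw [hudef, mulVec_mulVec, mul_nonsing_inv _ hdet, one_mulVec]
  have huw : u ⬝ᵥ w = (N:ℝ)⁻¹ * ∑ t, (xb t ⬝ᵥ u) * (yb t ⬝ᵥ v) := by
    rw [hw, quad_sum]
    exact congrArg _ (Finset.sum_congr rfl fun t _ => by rw [dotProduct_comm u (xb t)])
  have hQ : v ⬝ᵥ (Syy *ᵥ v) = (N:ℝ)⁻¹ * ∑ t, (yb t ⬝ᵥ v) ^ 2 := by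
    rw [hSyy, quad_sum]
    exact congrArg _ (Finset.sum_congr rfl fun t _ => by rw [dotProduct_comm v (yb t), sq])
  have hQ0 : 0 ≤ v ⬝ᵥ (Syy *ᵥ v) := by rw [hQ]; positivity
  have hBB : u ⬝ᵥ (Sxx *ᵥ u) = (N:ℝ)⁻¹ * ∑ t, (xb t ⬝ᵥ u) ^ 2 := by
    rw [hSxx, quad_sum]
    exact congrArg _ (Finset.sum_congr rfl fun t _ => by rw [dotProduct_comm u (xb t), sq])
  have hCS : (∑ t, (xb t ⬝ᵥ u) * (yb t ⬝ᵥ v)) ^ 2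
      ≤ (∑ t, (xb t ⬝ᵥ u) ^ 2) * ∑ t, (yb t ⬝ᵥ v) ^ 2 :=
    Finset.sum_mul_sq_le_sq_mul_sq _ _ _
  have h5 : (u ⬝ᵥ w) ^ 2 ≤ (u ⬝ᵥ (Sxx *ᵥ u)) * (v ⬝ᵥ (Syy *ᵥ v)) := by
    rw [huw, hBB, hQ, mul_pow]
    nlinarith [hCS, sq_nonneg ((N:ℝ)⁻¹)]
  have hdec : u ⬝ᵥ w = u ⬝ᵥ (Sxx *ᵥ u) + lam * (u ⬝ᵥ u) := by
    rw [← hGu, hGb, add_mulVec, dotProduct_add]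
    congr 1
    rw [smul_mulVec, one_mulVec, dotProduct_smul, smul_eq_mul]
  have hBB0 : 0 ≤ u ⬝ᵥ (Sxx *ᵥ u) := by rw [hBB]; positivity
  have huu0 : 0 ≤ u ⬝ᵥ u := by rw [← normEe_sq]; positivity
  have hSxxw : u ⬝ᵥ (Sxx *ᵥ u) ≤ u ⬝ᵥ w := by
    rw [hdec]; nlinarith
  have h6 : (u ⬝ᵥ w) ^ 2 ≤ (v ⬝ᵥ (Syy *ᵥ v)) * (u ⬝ᵥ w) := by
    calc (u ⬝ᵥ w) ^ 2 ≤ (u ⬝ᵥ (Sxx *ᵥ u)) * (v ⬝ᵥ (Syy *ᵥ v)) := h5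
      _ ≤ (u ⬝ᵥ w) * (v ⬝ᵥ (Syy *ᵥ v)) := mul_le_mul_of_nonneg_right hSxxw hQ0
      _ = (v ⬝ᵥ (Syy *ᵥ v)) * (u ⬝ᵥ w) := mul_comm _ _
  have h7 : u ⬝ᵥ w ≤ v ⬝ᵥ (Syy *ᵥ v) := by
    rcases le_or_gt (u ⬝ᵥ w) 0 with hc | hc
    · linarith
    · have := h6; rw [sq] at this
      exact le_of_mul_le_mul_right this hc
  have h8 : v ⬝ᵥ (Syy *ᵥ v) ≤ ‖Syy‖ * ‖Ee v‖ ^ 2 := by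
    calc v ⬝ᵥ (Syy *ᵥ v) ≤ ‖Ee v‖ * ‖Ee (Syy *ᵥ v)‖ := dot_le _ _
      _ ≤ ‖Ee v‖ * (‖Syy‖ * ‖Ee v‖) :=
          mul_le_mul_of_nonneg_left (norm_mulVec_le _ _) (norm_nonneg _)
      _ = ‖Syy‖ * ‖Ee v‖ ^ 2 := by ring
  have h9 : lam * (u ⬝ᵥ u) ≤ u ⬝ᵥ w := by rw [← hGu]; exact hquad u
  have h10 : ‖Ee u‖ ^ 2 ≤ lam⁻¹ * ‖Syy‖ * ‖Ee v‖ ^ 2 := by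
    have hchain : lam * (u ⬝ᵥ u) ≤ ‖Syy‖ * ‖Ee v‖ ^ 2 := by linarith
    rw [normEe_sq, show lam⁻¹ * ‖Syy‖ * ‖Ee v‖ ^ 2 = (‖Syy‖ * ‖Ee v‖ ^ 2) / lam by ring]
    exact (le_div_iff₀ hlam).mpr (by linarith)
  have hfin : ‖Ee u‖ ≤ Real.sqrt (lam⁻¹ * ‖Syy‖) * ‖Ee v‖ := by
    have h12 : Real.sqrt (‖Ee u‖ ^ 2) ≤ Real.sqrt (lam⁻¹ * ‖Syy‖ * ‖Ee v‖ ^ 2) :=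
      Real.sqrt_le_sqrt h10
    rw [Real.sqrt_mul (by positivity) (‖Ee v‖ ^ 2), Real.sqrt_sq (norm_nonneg (Ee u)),
      Real.sqrt_sq (norm_nonneg (Ee v))] at h12
    exact h12
  rw [hu]
  exact hfin
lemma vecMulVec_sub_decomp {m n : Type*} (a a' : m → ℝ) (b b' : n → ℝ) :
    vecMulVec a' b' - vecMulVec a b = vecMulVec (a' - a) b' + vecMulVec a (b' - b) := by
  ext i j
  simp only [Matrix.sub_apply, Matrix.add_apply, vecMulVec_apply, Pi.sub_apply]
  ring

lemma pert {p q N : ℕ} {c η : ℝ} (hc : 0 < c) (hη : 0 < η)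
    (a a' : Fin N → EuclideanSpace ℝ (Fin p)) (b b' : Fin N → EuclideanSpace ℝ (Fin q))
    (ha : ∀ t, ‖a t‖ ≤ c) (hb : ∀ t, ‖b t‖ ≤ c)
    (ha' : ∀ t, ‖a' t - a t‖ ≤ η) (hb' : ∀ t, ‖b' t - b t‖ ≤ η) :
    ‖((N:ℝ)⁻¹ • ∑ t, vecMulVec (a' t) (b' t)) - ((N:ℝ)⁻¹ • ∑ t, vecMulVec (a t) (b t))‖
      ≤ 2 * c * η + η ^ 2 := by
  rw [← smul_sub, ← Finset.sum_sub_distrib]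
  have hterm : ∀ t, ‖vecMulVec (a' t) (b' t) - vecMulVec (a t) (b t)‖
      ≤ 2 * c * η + η ^ 2 := by
    intro t
    rw [vecMulVec_sub_decomp]
    have hb'c : ‖b' t‖ ≤ c + η := by
      calc ‖b' t‖ = ‖(b' t - b t) + b t‖ := by rw [sub_add_cancel]
        _ ≤ ‖b' t - b t‖ + ‖b t‖ := norm_add_le _ _
        _ ≤ η + c := add_le_add (hb' t) (hb t)
        _ = c + η := by ring
    have h1 : ‖vecMulVec ((a' t : Fin p → ℝ) - (a t : Fin p → ℝ)) (b' t)‖ ≤ η * (c + η) := by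
      refine (norm_vecMulVec_le _ _).trans ?_
      have e1 : ‖Ee ((a' t : Fin p → ℝ) - (a t : Fin p → ℝ))‖ = ‖a' t - a t‖ := rfl
      have e2 : ‖Ee (b' t : Fin q → ℝ)‖ = ‖b' t‖ := rfl
      rw [e1, e2]
      exact mul_le_mul (ha' t) hb'c (norm_nonneg _) hη.le
    have h2 : ‖vecMulVec (a t : Fin p → ℝ) ((b' t : Fin q → ℝ) - (b t : Fin q → ℝ))‖ ≤ c * η := by
      refine (norm_vecMulVec_le _ _).trans ?_
      have e1 : ‖Ee (a t : Fin p → ℝ)‖ = ‖a t‖ := rfl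
      have e2 : ‖Ee ((b' t : Fin q → ℝ) - (b t : Fin q → ℝ))‖ = ‖b' t - b t‖ := rfl
      rw [e1, e2]
      exact mul_le_mul (ha t) (hb' t) (norm_nonneg _) hc.le
    calc ‖vecMulVec ((a' t : Fin p → ℝ) - (a t : Fin p → ℝ)) (b' t) +
          vecMulVec (a t : Fin p → ℝ) ((b' t : Fin q → ℝ) - (b t : Fin q → ℝ))‖
        ≤ ‖vecMulVec ((a' t : Fin p → ℝ) - (a t : Fin p → ℝ)) (b' t)‖ +
          ‖vecMulVec (a t : Fin p → ℝ) ((b' t : Fin q → ℝ) - (b t : Fin q → ℝ))‖ := norm_add_le _ _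
      _ ≤ η * (c + η) + c * η := add_le_add h1 h2
      _ = 2 * c * η + η ^ 2 := by ring
  have hsum : ‖∑ t, (vecMulVec (a' t) (b' t) - vecMulVec (a t) (b t))‖
      ≤ (N : ℝ) * (2 * c * η + η ^ 2) := by
    calc ‖∑ t, (vecMulVec (a' t) (b' t) - vecMulVec (a t) (b t))‖
        ≤ ∑ t, ‖vecMulVec (a' t) (b' t) - vecMulVec (a t) (b t)‖ := norm_sum_le _ _
      _ ≤ ∑ _t : Fin N, (2 * c * η + η ^ 2) := Finset.sum_le_sum fun t _ => hterm t
      _ = (N : ℝ) * (2 * c * η + η ^ 2) := by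
          rw [Finset.sum_const, Finset.card_univ, Fintype.card_fin, nsmul_eq_mul]
  rw [norm_smul, Real.norm_eq_abs, abs_inv, Nat.abs_cast]
  rcases Nat.eq_zero_or_pos N with hN | hN
  · subst hN; simp; positivity
  · have hN' : (0:ℝ) < N := by exact_mod_cast hN
    calc (N:ℝ)⁻¹ * ‖∑ t, (vecMulVec (a' t) (b' t) - vecMulVec (a t) (b t))‖
        ≤ (N:ℝ)⁻¹ * ((N : ℝ) * (2 * c * η + η ^ 2)) :=
          mul_le_mul_of_nonneg_left hsum (by positivity)
      _ = 2 * c * η + η ^ 2 := by field_simp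
end RidgeAux

/-- **Error in ridge regression due to Stage-1 estimation** (deterministic form of
Lemma B.3). If `‖x̄_t‖, ‖ȳ_t‖ ≤ c`, `‖x̂_t − x̄_t‖ ≤ η`, `‖ŷ_t − ȳ_t‖ ≤ η`, then the
ridge-regression matrices `Ŵ_λ` (from the estimates) and `W̄_λ` (from the true values)
satisfy `‖Ŵ_λ − W̄_λ‖ ≤ ‖(1/N)∑ ȳ_t ȳ_tᵀ‖^{1/2}·(2cη + η²)·λ^{−3/2} + (2cη + η²)/λ`. -/
theorem ridge_error_stage1 {dx dy N : ℕ} (lam c η : ℝ)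
    (hlam : 0 < lam) (hc : 0 < c) (hη : 0 < η)
    (xbar xhat : Fin N → EuclideanSpace ℝ (Fin dx))
    (ybar yhat : Fin N → EuclideanSpace ℝ (Fin dy))
    (hx : ∀ t, ‖xbar t‖ ≤ c) (hy : ∀ t, ‖ybar t‖ ≤ c)
    (hxe : ∀ t, ‖xhat t - xbar t‖ ≤ η) (hye : ∀ t, ‖yhat t - ybar t‖ ≤ η)
    (What Wbar : Matrix (Fin dy) (Fin dx) ℝ)
    (hWhat : What = ((N : ℝ)⁻¹ • ∑ t, Matrix.vecMulVec (yhat t) (xhat t)) *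
      ((N : ℝ)⁻¹ • (∑ t, Matrix.vecMulVec (xhat t) (xhat t)) + lam • 1)⁻¹)
    (hWbar : Wbar = ((N : ℝ)⁻¹ • ∑ t, Matrix.vecMulVec (ybar t) (xbar t)) *
      ((N : ℝ)⁻¹ • (∑ t, Matrix.vecMulVec (xbar t) (xbar t)) + lam • 1)⁻¹) :
    ‖What - Wbar‖ ≤
      Real.sqrt ‖(N : ℝ)⁻¹ • (∑ t, Matrix.vecMulVec (ybar t) (ybar t))‖ *
          (2 * c * η + η ^ 2) * lam ^ (-(3 : ℝ) / 2) +
        (2 * c * η + η ^ 2) / lam := by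
  have hΔ0 : (0:ℝ) ≤ 2 * c * η + η ^ 2 := by positivity
  set Sh : Matrix (Fin dy) (Fin dx) ℝ := (N : ℝ)⁻¹ • ∑ t, Matrix.vecMulVec (yhat t) (xhat t)
    with hSh
  set Sb : Matrix (Fin dy) (Fin dx) ℝ := (N : ℝ)⁻¹ • ∑ t, Matrix.vecMulVec (ybar t) (xbar t)
    with hSb
  set Gh : Matrix (Fin dx) (Fin dx) ℝ :=
    (N : ℝ)⁻¹ • (∑ t, Matrix.vecMulVec (xhat t) (xhat t)) + lam • 1 with hGh
  set Gb : Matrix (Fin dx) (Fin dx) ℝ :=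
    (N : ℝ)⁻¹ • (∑ t, Matrix.vecMulVec (xbar t) (xbar t)) + lam • 1 with hGb
  have hquadh : ∀ u : Fin dx → ℝ, lam * (u ⬝ᵥ u) ≤ u ⬝ᵥ (Gh *ᵥ u) := fun u =>
    RidgeAux.quad_lower hlam (fun t => (xhat t : Fin dx → ℝ)) u
  have hquadb : ∀ u : Fin dx → ℝ, lam * (u ⬝ᵥ u) ≤ u ⬝ᵥ (Gb *ᵥ u) := fun u =>
    RidgeAux.quad_lower hlam (fun t => (xbar t : Fin dx → ℝ)) u
  have hdeth : IsUnit Gh.det := RidgeAux.isUnit_det_of_quad Gh hlam hquadh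
  have hdetb : IsUnit Gb.det := RidgeAux.isUnit_det_of_quad Gb hlam hquadb
  have hinvh : ‖Gh⁻¹‖ ≤ lam⁻¹ := RidgeAux.inv_norm_le Gh hlam hquadh
  have hkey : ‖Sb * Gb⁻¹‖ ≤
      Real.sqrt (lam⁻¹ * ‖(N : ℝ)⁻¹ • (∑ t, Matrix.vecMulVec (ybar t) (ybar t))‖) :=
    RidgeAux.key hlam (fun t => (xbar t : Fin dx → ℝ)) (fun t => (ybar t : Fin dy → ℝ))
  have hpertG : ‖Gb - Gh‖ ≤ 2 * c * η + η ^ 2 := by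
    have e : Gb - Gh = ((N : ℝ)⁻¹ • ∑ t, Matrix.vecMulVec (xbar t) (xbar t)) -
        ((N : ℝ)⁻¹ • ∑ t, Matrix.vecMulVec (xhat t) (xhat t)) := by
      rw [hGb, hGh]; abel
    rw [e, ← norm_neg, neg_sub]
    exact RidgeAux.pert hc hη xbar xhat xbar xhat hx hx hxe hxe
  have hpertS : ‖Sh - Sb‖ ≤ 2 * c * η + η ^ 2 := by
    rw [hSh, hSb]
    exact RidgeAux.pert hc hη ybar yhat xbar xhat hy hx hye hxe
  have hdiff : What - Wbar = Sb * Gb⁻¹ * ((Gb - Gh) * Gh⁻¹) + (Sh - Sb) * Gh⁻¹ := by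
    rw [hWhat, hWbar]
    have e : Gh⁻¹ - Gb⁻¹ = Gb⁻¹ * (Gb - Gh) * Gh⁻¹ := by
      rw [Matrix.mul_sub, Matrix.sub_mul, Matrix.nonsing_inv_mul _ hdetb, Matrix.one_mul,
        Matrix.mul_assoc, Matrix.mul_nonsing_inv _ hdeth, Matrix.mul_one]
    calc Sh * Gh⁻¹ - Sb * Gb⁻¹ = Sb * (Gh⁻¹ - Gb⁻¹) + (Sh - Sb) * Gh⁻¹ := by
          rw [Matrix.mul_sub, Matrix.sub_mul]; abel
      _ = Sb * Gb⁻¹ * ((Gb - Gh) * Gh⁻¹) + (Sh - Sb) * Gh⁻¹ := by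
          rw [e, ← Matrix.mul_assoc, ← Matrix.mul_assoc, Matrix.mul_assoc (Sb * Gb⁻¹)]
  calc ‖What - Wbar‖
      ≤ ‖Sb * Gb⁻¹‖ * (‖Gb - Gh‖ * ‖Gh⁻¹‖) + ‖Sh - Sb‖ * ‖Gh⁻¹‖ := by
        rw [hdiff]
        refine (norm_add_le _ _).trans (add_le_add ?_ ?_)
        · exact (Matrix.l2_opNorm_mul _ _).trans
            (mul_le_mul_of_nonneg_left (Matrix.l2_opNorm_mul _ _) (norm_nonneg _))
        · exact Matrix.l2_opNorm_mul _ _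
    _ ≤ Real.sqrt (lam⁻¹ * ‖(N : ℝ)⁻¹ • (∑ t, Matrix.vecMulVec (ybar t) (ybar t))‖) *
          ((2 * c * η + η ^ 2) * lam⁻¹) + (2 * c * η + η ^ 2) * lam⁻¹ := by
        gcongr
    _ = Real.sqrt ‖(N : ℝ)⁻¹ • (∑ t, Matrix.vecMulVec (ybar t) (ybar t))‖ *
          (2 * c * η + η ^ 2) * lam ^ (-(3 : ℝ) / 2) + (2 * c * η + η ^ 2) / lam := by
        rw [Real.sqrt_mul (inv_nonneg.mpr hlam.le), Real.sqrt_inv]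
        have hr : lam ^ (-(3 : ℝ) / 2) = (Real.sqrt lam)⁻¹ * lam⁻¹ := by
          rw [show (-(3:ℝ)/2) = -((3:ℝ)/2) by norm_num, Real.rpow_neg hlam.le,
            show ((3:ℝ)/2) = 1/2 + 1 by norm_num, Real.rpow_add hlam, Real.rpow_one,
            ← Real.sqrt_eq_rpow, mul_inv]
        rw [hr, div_eq_mul_inv]
        ring
end

section
/- Ridge regression operator norm bound: For any vectors q₁,…,q_N ∈ ℝ^{d_q}, p₁,…,p_N ∈ ℝ^{d_p}, and any λ > 0, ‖((1/N)∑_{t=1}^N p_t q_tᵀ)·((1/N)∑_{t=1}^N q_t q_tᵀ + λI)^{−1}‖ ≤ ‖(1/N)∑_{t=1}^N p_t p_tᵀ‖^{1/2} / √λ. -/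
open scoped Matrix.Norms.L2Operator
open Matrix

private lemma dot_smul_sum_outer {m n N : ℕ} (c : ℝ) (a : Fin N → Fin m → ℝ)
    (b : Fin N → Fin n → ℝ) (z : Fin m → ℝ) (y : Fin n → ℝ) :
    z ⬝ᵥ ((c • ∑ t, Matrix.vecMulVec (a t) (b t)) *ᵥ y)
      = c * ∑ t, (z ⬝ᵥ a t) * (b t ⬝ᵥ y) := by
  simp only [Matrix.mulVec, dotProduct, Matrix.smul_apply, Matrix.sum_apply,
    Matrix.vecMulVec_apply, smul_eq_mul, Finset.mul_sum, Finset.sum_mul]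
  refine Eq.trans (Finset.sum_congr rfl fun i _ => Finset.sum_comm (f := _) (s := _) (t := _)) ?_
  refine Eq.trans (Finset.sum_comm (f := _) (s := _) (t := _)) ?_
  refine Finset.sum_congr rfl fun t _ => ?_
  refine Eq.trans (Finset.sum_comm (f := _) (s := _) (t := _)) ?_
  exact Finset.sum_congr rfl fun j _ => Finset.sum_congr rfl fun i _ => by ring

private lemma dot_le_norm {n : ℕ} (x y : EuclideanSpace ℝ (Fin n)) :
    (x : Fin n → ℝ) ⬝ᵥ (y : Fin n → ℝ) ≤ ‖x‖ * ‖y‖ := by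
  have h : (x : Fin n → ℝ) ⬝ᵥ (y : Fin n → ℝ) = inner ℝ x y := by
    simp only [dotProduct, PiLp.inner_apply, RCLike.inner_apply, conj_trivial, mul_comm]
  rw [h]
  exact real_inner_le_norm x y

private lemma dot_self_eq {n : ℕ} (x : EuclideanSpace ℝ (Fin n)) :
    (x : Fin n → ℝ) ⬝ᵥ (x : Fin n → ℝ) = ‖x‖ ^ 2 := by
  have h : (x : Fin n → ℝ) ⬝ᵥ (x : Fin n → ℝ) = inner ℝ x x := by
    simp only [dotProduct, PiLp.inner_apply, RCLike.inner_apply, conj_trivial, mul_comm]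
  rw [h, real_inner_self_eq_norm_sq]

private lemma cs_aux {N : ℕ} {c : ℝ} (hc : 0 ≤ c) (f g : Fin N → ℝ) :
    c * ∑ t, f t * g t ≤
      Real.sqrt (c * ∑ t, f t ^ 2) * Real.sqrt (c * ∑ t, g t ^ 2) := by
  have hX : (0:ℝ) ≤ ∑ t, f t ^ 2 := Finset.sum_nonneg fun t _ => sq_nonneg _
  have h : (∑ t, f t * g t) ≤ Real.sqrt ((∑ t, f t ^ 2) * ∑ t, g t ^ 2) := by
    calc ∑ t, f t * g t ≤ |∑ t, f t * g t| := le_abs_self _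
      _ = Real.sqrt ((∑ t, f t * g t) ^ 2) := (Real.sqrt_sq_eq_abs _).symm
      _ ≤ Real.sqrt ((∑ t, f t ^ 2) * ∑ t, g t ^ 2) :=
          Real.sqrt_le_sqrt (Finset.sum_mul_sq_le_sq_mul_sq _ f g)
  calc c * ∑ t, f t * g t
      ≤ c * Real.sqrt ((∑ t, f t ^ 2) * ∑ t, g t ^ 2) :=
        mul_le_mul_of_nonneg_left h hc
    _ = Real.sqrt (c * ∑ t, f t ^ 2) * Real.sqrt (c * ∑ t, g t ^ 2) := by
        rw [Real.sqrt_mul hc, Real.sqrt_mul hc, Real.sqrt_mul hX]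
        rw [show Real.sqrt c * Real.sqrt (∑ t, f t ^ 2) *
            (Real.sqrt c * Real.sqrt (∑ t, g t ^ 2)) =
            (Real.sqrt c * Real.sqrt c) *
            (Real.sqrt (∑ t, f t ^ 2) * Real.sqrt (∑ t, g t ^ 2)) from by ring,
          Real.mul_self_sqrt hc]

/-- **Ridge regression operator norm bound.** For any vectors `q₁,…,q_N`, `p₁,…,p_N` and
any `λ > 0`,
`‖((1/N)∑ p_t q_tᵀ)·((1/N)∑ q_t q_tᵀ + λI)⁻¹‖ ≤ ‖(1/N)∑ p_t p_tᵀ‖^{1/2}/√λ`. -/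
theorem ridge_operator_norm_bound {dq dp N : ℕ}
    (q : Fin N → EuclideanSpace ℝ (Fin dq)) (p : Fin N → EuclideanSpace ℝ (Fin dp))
    (lam : ℝ) (hlam : 0 < lam) :
    ‖((N : ℝ)⁻¹ • ∑ t, Matrix.vecMulVec (p t) (q t)) *
        ((N : ℝ)⁻¹ • (∑ t, Matrix.vecMulVec (q t) (q t)) + lam • 1)⁻¹‖ ≤
      Real.sqrt ‖(N : ℝ)⁻¹ • (∑ t, Matrix.vecMulVec (p t) (p t))‖ / Real.sqrt lam := by
  classical
  set c : ℝ := (N : ℝ)⁻¹ with hc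
  have hc0 : (0:ℝ) ≤ c := by positivity
  set A : Matrix (Fin dp) (Fin dq) ℝ := c • ∑ t, Matrix.vecMulVec (p t) (q t) with hA
  set G : Matrix (Fin dq) (Fin dq) ℝ := c • ∑ t, Matrix.vecMulVec (q t) (q t) with hG
  set P : Matrix (Fin dp) (Fin dp) ℝ := c • ∑ t, Matrix.vecMulVec (p t) (p t) with hP
  set M : Matrix (Fin dq) (Fin dq) ℝ := G + lam • 1 with hM
  set K : ℝ := Real.sqrt ‖P‖ / Real.sqrt lam with hK
  have hK0 : 0 ≤ K := by positivity
  -- positive definiteness of M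
  have hermG : G.IsHermitian := by
    show Gᴴ = G
    ext i j
    simp [hG, Matrix.conjTranspose_apply, Matrix.smul_apply, Matrix.sum_apply,
      Matrix.vecMulVec_apply, mul_comm]
  have hGdot : ∀ u v : Fin dq → ℝ,
      u ⬝ᵥ (G *ᵥ v) = c * ∑ t, (u ⬝ᵥ (q t : Fin dq → ℝ)) * ((q t : Fin dq → ℝ) ⬝ᵥ v) :=
    fun u v => dot_smul_sum_outer c (fun t => q t) (fun t => q t) u v
  have hGsd : G.PosSemidef := by
    refine Matrix.PosSemidef.of_dotProduct_mulVec_nonneg hermG fun v => ?_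
    rw [star_trivial, hGdot v v]
    have : ∀ t : Fin N, (v ⬝ᵥ (q t : Fin dq → ℝ)) * ((q t : Fin dq → ℝ) ⬝ᵥ v)
        = ((q t : Fin dq → ℝ) ⬝ᵥ v) ^ 2 := fun t => by
      rw [dotProduct_comm]; ring
    rw [Finset.sum_congr rfl fun t _ => this t]
    positivity
  have hlamPD : (lam • (1 : Matrix (Fin dq) (Fin dq) ℝ)).PosDef := by
    refine Matrix.PosDef.of_dotProduct_mulVec_pos ?_ fun v hv => ?_
    · show _ᴴ = _
      rw [Matrix.conjTranspose_smul, Matrix.conjTranspose_one]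
      simp
    · rw [star_trivial, Matrix.smul_mulVec, Matrix.one_mulVec,
        dotProduct_smul, smul_eq_mul]
      have hvv : 0 < v ⬝ᵥ v := by
        have := Matrix.dotProduct_star_self_pos_iff (v := v) |>.mpr hv
        rwa [star_trivial] at this
      exact mul_pos hlam hvv
  have hMpd : M.PosDef := Matrix.PosDef.posSemidef_add hGsd hlamPD
  have hdet : IsUnit M.det := hMpd.det_pos.ne'.isUnit
  -- pointwise bound
  have hbound : ∀ x : EuclideanSpace ℝ (Fin dq),
      ‖(EuclideanSpace.equiv (Fin dp) ℝ).symm ((A * M⁻¹) *ᵥ x)‖ ≤ K * ‖x‖ := by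
    intro x
    set yv : Fin dq → ℝ := M⁻¹ *ᵥ x with hyv
    set y : EuclideanSpace ℝ (Fin dq) := (EuclideanSpace.equiv (Fin dq) ℝ).symm yv with hy
    set zv : Fin dp → ℝ := A *ᵥ yv with hzv
    set z : EuclideanSpace ℝ (Fin dp) := (EuclideanSpace.equiv (Fin dp) ℝ).symm zv with hz
    have hgoal : (EuclideanSpace.equiv (Fin dp) ℝ).symm ((A * M⁻¹) *ᵥ x) = z := by
      rw [hz, hzv, hyv, Matrix.mulVec_mulVec]
    rw [hgoal]
    have hMy : M *ᵥ yv = x := by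
      rw [hyv, Matrix.mulVec_mulVec, Matrix.mul_nonsing_inv _ hdet, Matrix.one_mulVec]
    -- quadratic form identities
    have h1lam : yv ⬝ᵥ ((lam • (1 : Matrix (Fin dq) (Fin dq) ℝ)) *ᵥ yv) = lam * ‖y‖ ^ 2 := by
      rw [Matrix.smul_mulVec, Matrix.one_mulVec, dotProduct_smul, smul_eq_mul,
        show yv ⬝ᵥ yv = (y : Fin dq → ℝ) ⬝ᵥ (y : Fin dq → ℝ) from rfl, dot_self_eq]
    have hMyy : yv ⬝ᵥ (M *ᵥ yv) = yv ⬝ᵥ (G *ᵥ yv) + lam * ‖y‖ ^ 2 := by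
      rw [hM, Matrix.add_mulVec, dotProduct_add, h1lam]
    have hGy0 : 0 ≤ yv ⬝ᵥ (G *ᵥ yv) := by
      have := hGsd.dotProduct_mulVec_nonneg yv
      rwa [star_trivial] at this
    have hyx : yv ⬝ᵥ (M *ᵥ yv) ≤ ‖y‖ * ‖x‖ := by
      rw [hMy]
      exact dot_le_norm y x
    have hy_le : ‖y‖ ≤ ‖x‖ / lam := by
      rcases eq_or_lt_of_le (norm_nonneg y) with h0 | h0
      · rw [← h0]; positivity
      · rw [le_div_iff₀ hlam]
        have h1 : lam * ‖y‖ ^ 2 ≤ ‖y‖ * ‖x‖ := by linarith [hMyy, hyx, hGy0]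
        nlinarith [h1, h0]
    have hGyx : yv ⬝ᵥ (G *ᵥ yv) ≤ ‖x‖ ^ 2 / lam := by
      have h1 : yv ⬝ᵥ (G *ᵥ yv) ≤ ‖y‖ * ‖x‖ := by
        have := mul_nonneg hlam.le (sq_nonneg ‖y‖)
        linarith [hMyy, hyx]
      have h2 : ‖y‖ * ‖x‖ ≤ (‖x‖ / lam) * ‖x‖ :=
        mul_le_mul_of_nonneg_right hy_le (norm_nonneg x)
      calc yv ⬝ᵥ (G *ᵥ yv) ≤ (‖x‖ / lam) * ‖x‖ := le_trans h1 h2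
        _ = ‖x‖ ^ 2 / lam := by ring
    -- Cauchy-Schwarz step
    have hz2 : ‖z‖ ^ 2 = zv ⬝ᵥ (A *ᵥ yv) := by
      rw [← hzv, show zv ⬝ᵥ zv = (z : Fin dp → ℝ) ⬝ᵥ (z : Fin dp → ℝ) from rfl, dot_self_eq]
    have hAdot : zv ⬝ᵥ (A *ᵥ yv)
        = c * ∑ t, (zv ⬝ᵥ (p t : Fin dp → ℝ)) * ((q t : Fin dq → ℝ) ⬝ᵥ yv) :=
      dot_smul_sum_outer c (fun t => p t) (fun t => q t) zv yv
    have hPdot : zv ⬝ᵥ (P *ᵥ zv) = c * ∑ t, (zv ⬝ᵥ (p t : Fin dp → ℝ)) ^ 2 := by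
      rw [dot_smul_sum_outer c (fun t => p t) (fun t => p t) zv zv]
      congr 1
      refine Finset.sum_congr rfl fun t _ => ?_
      rw [dotProduct_comm ((p t : Fin dp → ℝ)) zv]; ring
    have hGdotv : yv ⬝ᵥ (G *ᵥ yv) = c * ∑ t, ((q t : Fin dq → ℝ) ⬝ᵥ yv) ^ 2 := by
      rw [hGdot yv yv]
      congr 1
      refine Finset.sum_congr rfl fun t _ => ?_
      rw [dotProduct_comm yv]; ring
    have hcs : zv ⬝ᵥ (A *ᵥ yv) ≤
        Real.sqrt (zv ⬝ᵥ (P *ᵥ zv)) * Real.sqrt (yv ⬝ᵥ (G *ᵥ yv)) := by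
      rw [hAdot, hPdot, hGdotv]
      exact cs_aux hc0 _ _
    have hPz : zv ⬝ᵥ (P *ᵥ zv) ≤ ‖P‖ * ‖z‖ ^ 2 := by
      calc zv ⬝ᵥ (P *ᵥ zv) ≤ ‖z‖ * ‖(EuclideanSpace.equiv (Fin dp) ℝ).symm (P *ᵥ zv)‖ :=
            dot_le_norm z ((EuclideanSpace.equiv (Fin dp) ℝ).symm (P *ᵥ zv))
        _ ≤ ‖z‖ * (‖P‖ * ‖z‖) :=
            mul_le_mul_of_nonneg_left (Matrix.l2_opNorm_mulVec P z) (norm_nonneg z)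
        _ = ‖P‖ * ‖z‖ ^ 2 := by ring
    have hPz0 : 0 ≤ zv ⬝ᵥ (P *ᵥ zv) := by
      rw [hPdot]; positivity
    have hsq1 : Real.sqrt (zv ⬝ᵥ (P *ᵥ zv)) ≤ Real.sqrt ‖P‖ * ‖z‖ := by
      calc Real.sqrt (zv ⬝ᵥ (P *ᵥ zv)) ≤ Real.sqrt (‖P‖ * ‖z‖ ^ 2) := Real.sqrt_le_sqrt hPz
        _ = Real.sqrt ‖P‖ * ‖z‖ := by
            rw [Real.sqrt_mul (norm_nonneg P), Real.sqrt_sq (norm_nonneg z)]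
    have hsq2 : Real.sqrt (yv ⬝ᵥ (G *ᵥ yv)) ≤ ‖x‖ / Real.sqrt lam := by
      calc Real.sqrt (yv ⬝ᵥ (G *ᵥ yv)) ≤ Real.sqrt (‖x‖ ^ 2 / lam) := Real.sqrt_le_sqrt hGyx
        _ = ‖x‖ / Real.sqrt lam := by
            rw [Real.sqrt_div (sq_nonneg _), Real.sqrt_sq (norm_nonneg x)]
    have hzz : ‖z‖ ^ 2 ≤ (Real.sqrt ‖P‖ * ‖z‖) * (‖x‖ / Real.sqrt lam) := by
      rw [hz2]
      calc zv ⬝ᵥ (A *ᵥ yv) ≤ Real.sqrt (zv ⬝ᵥ (P *ᵥ zv)) * Real.sqrt (yv ⬝ᵥ (G *ᵥ yv)) := hcs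
        _ ≤ (Real.sqrt ‖P‖ * ‖z‖) * (‖x‖ / Real.sqrt lam) := by
            apply mul_le_mul hsq1 hsq2 (Real.sqrt_nonneg _)
            positivity
    rcases eq_or_lt_of_le (norm_nonneg z) with h0 | h0
    · rw [← h0]
      positivity
    · have hfin : ‖z‖ * ‖z‖ ≤ (K * ‖x‖) * ‖z‖ := by
        have h2 : (Real.sqrt ‖P‖ * ‖z‖) * (‖x‖ / Real.sqrt lam) = (K * ‖x‖) * ‖z‖ := by
          rw [hK]; ring
        calc ‖z‖ * ‖z‖ = ‖z‖ ^ 2 := (sq ‖z‖).symm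
          _ ≤ (Real.sqrt ‖P‖ * ‖z‖) * (‖x‖ / Real.sqrt lam) := hzz
          _ = (K * ‖x‖) * ‖z‖ := h2
      exact le_of_mul_le_mul_right hfin h0
  -- conclude
  rw [Matrix.l2_opNorm_def]
  exact ContinuousLinearMap.opNorm_le_bound _ hK0 fun x => hbound x
end
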